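/- arXiv:2506.03802 — 2 statements merged into one kernel-verified Lean document; each statement's English description precedes it below -/
import Mathlib

section
/- MI(m, X) = 0 if and only if (A) every agent a receives the Nash value of their game, U_{a,m(a)}(x_a, x_{m(a)}) = V*_{a,m(a)}, and (B) the matching m is individually rational and has no blocking pairs under the utilities induced by X (i.e., (m, X) is a matching equilibrium with these value conditions). -/
noncomputable section

variable {P A : Type*} [Fintype P] [Fintype A]

/-- Feasibility of a subsidy vector `s` for the matching-instability linear program.
Here `u a` is the current expected utility `U_{a,m(a)}(x_a, x_{m(a)})` of agent `a`,
`u0 a` is the utility `U_{a,⊥}` of being unmatched, `Vm a` is the Nash value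
`V*_{a,m(a)}` of the game agent `a` plays with their current match, and
`V p q`, `V' q p` are the Nash values `V*_{p,q}`, `V*_{q,p}` of the game between a
left agent `p` and a right agent `q`. -/
def Feasible (u u0 Vm : P ⊕ A → ℝ) (V : P → A → ℝ) (V' : A → P → ℝ)
    (s : P ⊕ A → ℝ) : Prop :=
  (∀ (p : P) (q : A),
      min (V p q - u (.inl p) - s (.inl p)) (V' q p - u (.inr q) - s (.inr q)) ≤ 0) ∧
  (∀ a : P ⊕ A, 0 ≤ u a - u0 a + s a) ∧
  (∀ a : P ⊕ A, Vm a - u a - s a ≤ 0) ∧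
  (∀ a : P ⊕ A, 0 ≤ s a)

/-- The matching instability `MI(m, X)`: the minimum total subsidy over all feasible
subsidy vectors. -/
def MI (u u0 Vm : P ⊕ A → ℝ) (V : P → A → ℝ) (V' : A → P → ℝ) : ℝ :=
  sInf {t : ℝ | ∃ s : P ⊕ A → ℝ, Feasible u u0 Vm V V' s ∧ t = ∑ a, s a}

/-- `MI(m, X) = 0` iff (A) every agent receives the Nash value of
their game, and (B) the matching is individually rational and has no blocking
pairs under the utilities induced by the strategies.

Here `μ` is the matching (with `μ a = none` meaning `a` is unmatched), matched
pairs play zero-sum games (so their utilities and values are opposite), and an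
unmatched agent gets their outside utility. -/
theorem stmt7 (u u0 Vm : P ⊕ A → ℝ) (V : P → A → ℝ) (V' : A → P → ℝ)
    (μ : P ⊕ A → Option (P ⊕ A))
    (hsym : ∀ a b : P ⊕ A, μ a = some b → μ b = some a)
    (hside : ∀ (p : P) (b : P ⊕ A), μ (.inl p) = some b → ∃ q : A, b = .inr q)
    (hside' : ∀ (q : A) (b : P ⊕ A), μ (.inr q) = some b → ∃ p : P, b = .inl p)
    (hzs : ∀ a b : P ⊕ A, μ a = some b → u b = -u a ∧ Vm b = -Vm a)
    (hVm : ∀ (p : P) (q : A), μ (.inl p) = some (.inr q) →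
      Vm (.inl p) = V p q ∧ Vm (.inr q) = V' q p)
    (hunm : ∀ a : P ⊕ A, μ a = none → u a = u0 a ∧ Vm a = u0 a) :
    MI u u0 Vm V V' = 0 ↔
      ((∀ a : P ⊕ A, u a = Vm a) ∧
        (∀ a : P ⊕ A, u0 a ≤ u a) ∧
        (∀ (p : P) (q : A), ¬(u (.inl p) < V p q ∧ u (.inr q) < V' q p))) := by

  classical
  set S : Set ℝ := {t : ℝ | ∃ s : P ⊕ A → ℝ, Feasible u u0 Vm V V' s ∧ t = ∑ a, s a} with hS
  -- every element of S is nonnegative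
  have hlow : ∀ t ∈ S, (0:ℝ) ≤ t := by
    rintro t ⟨s, hs, rfl⟩
    exact Finset.sum_nonneg fun a _ => hs.2.2.2 a
  -- S is nonempty
  have hne : S.Nonempty := by
    set c : P ⊕ A → ℝ := fun a =>
      Sum.casesOn a (fun p => ⨆ q : A, (V p q - u (Sum.inl p))) (fun _ => 0) with hc
    refine ⟨_, ⟨fun a => max 0 (max (u0 a - u a) (max (Vm a - u a) (c a))), ?_, rfl⟩⟩
    refine ⟨?_, ?_, ?_, ?_⟩
    · intro p q
      refine min_le_of_left_le ?_
      have h1 : V p q - u (Sum.inl p) ≤ c (Sum.inl p) := by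
        have : Nonempty A := ⟨q⟩
        exact le_ciSup (f := fun q : A => V p q - u (Sum.inl p))
          (Set.Finite.bddAbove (Set.finite_range _)) q
      have h2 : c (Sum.inl p) ≤ max 0 (max (u0 (Sum.inl p) - u (Sum.inl p))
          (max (Vm (Sum.inl p) - u (Sum.inl p)) (c (Sum.inl p)))) :=
        le_max_of_le_right (le_max_of_le_right (le_max_right _ _))
      linarith
    · intro a
      have : u0 a - u a ≤ max 0 (max (u0 a - u a) (max (Vm a - u a) (c a))) :=
        le_max_of_le_right (le_max_left _ _)
      linarith
    · intro a
      have : Vm a - u a ≤ max 0 (max (u0 a - u a) (max (Vm a - u a) (c a))) :=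
        le_max_of_le_right (le_max_of_le_right (le_max_left _ _))
      linarith
    · intro a; exact le_max_left _ _
  constructor
  · intro hMI
    -- key: for every ε > 0 there is a feasible s with each coordinate < ε
    have key : ∀ ε > (0:ℝ), ∃ s : P ⊕ A → ℝ,
        Feasible u u0 Vm V V' s ∧ ∀ a, s a < ε := by
      intro ε hε
      have hlt : sInf S < ε := by
        have : sInf S = 0 := hMI
        linarith
      obtain ⟨t, ht, htε⟩ := exists_lt_of_csInf_lt hne hlt
      obtain ⟨s, hs, rfl⟩ := ht
      refine ⟨s, hs, fun a => lt_of_le_of_lt ?_ htε⟩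
      exact Finset.single_le_sum (fun b _ => hs.2.2.2 b) (Finset.mem_univ a)
    have hVmu : ∀ a, Vm a ≤ u a := by
      intro a
      by_contra h
      push_neg at h
      obtain ⟨s, hs, hsmall⟩ := key (Vm a - u a) (by linarith)
      have := hs.2.2.1 a
      have := hsmall a
      linarith
    have huVm : ∀ a, u a ≤ Vm a := by
      intro a
      cases hμ : μ a with
      | none =>
        obtain ⟨h1, h2⟩ := hunm a hμ
        rw [h1, h2]
      | some b =>
        obtain ⟨h1, h2⟩ := hzs a b hμ
        have := hVmu b
        rw [h1, h2] at this
        linarith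
    refine ⟨fun a => le_antisymm (huVm a) (hVmu a), ?_, ?_⟩
    · intro a
      by_contra h
      push_neg at h
      obtain ⟨s, hs, hsmall⟩ := key (u0 a - u a) (by linarith)
      have := hs.2.1 a
      have := hsmall a
      linarith
    · rintro p q ⟨h1, h2⟩
      obtain ⟨s, hs, hsmall⟩ := key (min (V p q - u (Sum.inl p)) (V' q p - u (Sum.inr q)))
        (lt_min (by linarith) (by linarith))
      have hc := hs.1 p q
      have hp := hsmall (Sum.inl p)
      have hq := hsmall (Sum.inr q)
      have hp' : s (Sum.inl p) < V p q - u (Sum.inl p) :=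
        lt_of_lt_of_le hp (min_le_left _ _)
      have hq' : s (Sum.inr q) < V' q p - u (Sum.inr q) :=
        lt_of_lt_of_le hq (min_le_right _ _)
      rcases min_le_iff.mp hc with h | h <;> linarith
  · rintro ⟨hA, hIR, hNB⟩
    have h0 : (0:ℝ) ∈ S := by
      refine ⟨fun _ => 0, ⟨?_, ?_, ?_, ?_⟩, by simp⟩
      · intro p q
        by_contra h
        push_neg at h
        rw [lt_min_iff] at h
        exact hNB p q ⟨by linarith [h.1], by linarith [h.2]⟩
      · intro a; have := hIR a; simpa using this
      · intro a; rw [hA a]; simp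
      · intro a; exact le_refl 0
    have h1 : sInf S ≤ 0 := csInf_le ⟨0, hlow⟩ h0
    have h2 : (0:ℝ) ≤ sInf S := le_csInf hne hlow
    show sInf S = 0
    exact le_antisymm h1 h2
end
end

section
/- Let m be a matching with strategies X, and suppose there exist estimated utilities Ū and estimated values V̄* such that: (i) V̄*_{a,m(a)} ≤ Ū_{a,m(a)}(x_a, x_{m(a)}) for all a; (ii) m is stable with respect to V̄* (no pair (p,q) with V̄*_{p,q} > V̄*_{p,m(p)} and V̄*_{q,p} > V̄*_{q,m(q)}, and V̄*_{a,m(a)} ≥ U_{a,⊥} for all a); (iii) optimism holds: V*_{a,a'} ≤ V̄*_{a,a'} and U_{a,m(a)}(x_a, x_{m(a)}) ≤ Ū_{a,m(a)}(x_a, x_{m(a)}) for all a, a'. Then the subsidies s_a := Ū_{a,m(a)}(x_a, x_{m(a)}) − U_{a,m(a)}(x_a, x_{m(a)}) form a feasible solution to the matching instability program, and hence MI(m, X) ≤ Σ_{a} [Ū_{a,m(a)}(x_a, x_{m(a)}) − U_{a,m(a)}(x_a, x_{m(a)})]. -/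
noncomputable section

variable {P A : Type*} [Fintype P] [Fintype A]

/-- if the estimated quantities are optimistic, each agent's
estimated utility is at least the estimated value of their matched game, and the
matching is stable with respect to the estimated values, then the subsidies
`s_a = Ū_a − U_a` are feasible for the matching-instability program, and hence
`MI(m, X) ≤ Σ_a (Ū_a − U_a)`.

Here `ubar a` is the estimated utility `Ū_{a,m(a)}(x_a, x_{m(a)})`, `Vbm a` the
estimated value `V̄*_{a,m(a)}` of `a`'s matched game, and `Vb p q`, `Vb' q p` the
estimated values `V̄*_{p,q}`, `V̄*_{q,p}` of cross-side games. -/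
theorem stmt12 (u u0 Vm : P ⊕ A → ℝ) (V : P → A → ℝ) (V' : A → P → ℝ)
    (ubar Vbm : P ⊕ A → ℝ) (Vb : P → A → ℝ) (Vb' : A → P → ℝ)
    -- (i) estimated value is at most estimated utility for every agent
    (hi : ∀ a : P ⊕ A, Vbm a ≤ ubar a)
    -- (ii) stability w.r.t. the estimated values
    (hii_blocking : ∀ (p : P) (q : A),
      ¬(Vbm (.inl p) < Vb p q ∧ Vbm (.inr q) < Vb' q p))
    (hii_IR : ∀ a : P ⊕ A, u0 a ≤ Vbm a)
    -- (iii) optimism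
    (hiii_V : ∀ (p : P) (q : A), V p q ≤ Vb p q)
    (hiii_V' : ∀ (q : A) (p : P), V' q p ≤ Vb' q p)
    (hiii_Vm : ∀ a : P ⊕ A, Vm a ≤ Vbm a)
    (hiii_u : ∀ a : P ⊕ A, u a ≤ ubar a) :
    Feasible u u0 Vm V V' (fun a => ubar a - u a) ∧
      MI u u0 Vm V V' ≤ ∑ a, (ubar a - u a) := by
  have hfeas : Feasible u u0 Vm V V' (fun a => ubar a - u a) := by
    refine ⟨?_, ?_, ?_, ?_⟩
    · intro p q
      rcases not_and_or.mp (hii_blocking p q) with h | h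
      · exact min_le_of_left_le (by push_neg at h; have := hiii_V p q; have := hi (.inl p); simp; linarith)
      · exact min_le_of_right_le (by push_neg at h; have := hiii_V' q p; have := hi (.inr q); simp; linarith)
    · intro a; have := hii_IR a; have := hi a; simp; linarith
    · intro a; have := hiii_Vm a; have := hi a; simp; linarith
    · intro a; have := hiii_u a; simp; linarith
  refine ⟨hfeas, csInf_le ?_ ⟨_, hfeas, rfl⟩⟩
  refine ⟨0, ?_⟩
  rintro t ⟨s, hs, rfl⟩
  exact Finset.sum_nonneg fun a _ => hs.2.2.2 a
end
end
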